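/- Let P ⊆ 2^ω be a perfect set and let Q_n ⊆ P (n ∈ ℕ) be perfect sets such that μ_P(⋃_{n∈ℕ} Q_n) = 1. If A ⊆ P is such that A ∩ Q_n is Q_n-measurable for every n ∈ ℕ, then A is P-measurable and μ_P(A) ≤ Σ_{n∈ℕ} μ_{Q_n}(A ∩ Q_n). In particular, if A ∩ Q_n is Q_n-null for all n ∈ ℕ, then A is P-null. -/

import Mathlib

open MeasureTheory Set Pointwise

/-- The Cantor space `2^ω`, a compact topological group under coordinatewise
addition mod 2. -/
abbrev CS := ℕ → ZMod 2

/-- The basic clopen set `[w]` determined by a finite binary sequence `w`: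
all `x ∈ 2^ω` extending `w`. -/
def cyl (w : List (ZMod 2)) : Set CS := {x | ∀ i, i < w.length → x i = w.getD i 0}

/-- `w` is a branching node of `P`: both `[w⌢0] ∩ P` and `[w⌢1] ∩ P` are nonempty. -/
def Branch (P : Set CS) (w : List (ZMod 2)) : Prop :=
  (cyl (w ++ [0]) ∩ P).Nonempty ∧ (cyl (w ++ [1]) ∩ P).Nonempty

/-- A perfect subset of Cantor space: nonempty, closed, with no isolated points. -/
def PerfSet (P : Set CS) : Prop := Perfect P ∧ P.Nonempty

/-- `ν` is a canonical measure of the perfect set `P`: a Borel probability measure with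
`ν P = 1` and `ν [w⌢0] = ν [w⌢1]` for every branching node `w` of `P`. -/
def IsCanonical (P : Set CS) (ν : Measure CS) : Prop :=
  IsProbabilityMeasure ν ∧ ν P = 1 ∧
    ∀ w : List (ZMod 2), Branch P w → ν (cyl (w ++ [0])) = ν (cyl (w ++ [1]))

/-- `A` is `P`-null: the `μ_P`-outer measure of `A ∩ P` is `0`
(quantified over all canonical measures of `P`). -/
def PNull (P A : Set CS) : Prop := ∀ ν : Measure CS, IsCanonical P ν → ν (A ∩ P) = 0

/-- `A` is `P`-measurable: `A ∩ P` differs from a Borel set by a `P`-null set,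
i.e. it is null-measurable with respect to the canonical measure of `P`. -/
def PMeasurable (P A : Set CS) : Prop :=
  ∀ ν : Measure CS, IsCanonical P ν → NullMeasurableSet (A ∩ P) ν

/-- `X` is perfectly null: `P`-null for every perfect set `P`. -/
def PerfectlyNull (X : Set CS) : Prop := ∀ P, PerfSet P → PNull P X

/-- `μ` is the fair-coin (Lebesgue product) measure on `2^ω`:
a Borel probability measure with `μ [w] = 2^{-|w|}` for every finite binary sequence. -/
def IsFairCoin (μ : Measure CS) : Prop :=
  IsProbabilityMeasure μ ∧ ∀ w : List (ZMod 2), μ (cyl w) = (2 : ENNReal)⁻¹ ^ w.length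

/-- The number of branching nodes of `P` that are proper initial segments of `v`. -/
noncomputable def brCount (P : Set CS) (v : List (ZMod 2)) : ℕ :=
  Set.ncard {u : List (ZMod 2) | u <+: v ∧ u ≠ v ∧ Branch P u}

/-- A balanced perfect set: branching nodes of strictly smaller level
are strictly shorter. -/
def BalancedPerf (P : Set CS) : Prop :=
  PerfSet P ∧ ∀ v w : List (ZMod 2), Branch P v → Branch P w →
    brCount P v < brCount P w → v.length < w.length

/-- A uniformly perfect set: on each length, either all nodes meeting `P` branch,
or none does. -/
def UniformlyPerf (P : Set CS) : Prop :=
  PerfSet P ∧ ∀ n : ℕ,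
    (∀ w : List (ZMod 2), w.length = n → (cyl w ∩ P).Nonempty → Branch P w) ∨
    (∀ w : List (ZMod 2), w.length = n → ¬ Branch P w)

/-- A Silver perfect set: determined by a partial function `ℕ ⇀ 2`
whose domain has infinite complement. -/
def SilverPerf (P : Set CS) : Prop :=
  ∃ f : ℕ → Option (ZMod 2), {n | f n = none}.Infinite ∧
    P = {x | ∀ n b, f n = some b → x n = b}

/-- A Marczewski null (`s₀`) set. -/
def S0Set (X : Set CS) : Prop :=
  ∀ P, PerfSet P → ∃ Q, PerfSet Q ∧ Q ⊆ P ∧ Q ∩ X = ∅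

/-- `S` is a Sierpiński set with respect to the measure `μ`: uncountable, with
countable intersection with every `μ`-null set. -/
def Sierpinski (μ : Measure CS) (S : Set CS) : Prop :=
  ¬ S.Countable ∧ ∀ N : Set CS, μ N = 0 → (S ∩ N).Countable

/-- The interleaving homeomorphism `h : 2^ω × 2^ω → 2^ω`,
`h(x,y) = ⟨x 0, y 0, x 1, y 1, …⟩`. -/
def interleave (p : CS × CS) : CS := fun n => if n % 2 = 0 then p.1 (n / 2) else p.2 (n / 2)

/-- `X` is universally null: outer measure zero with respect to every finite diffused
Borel measure on `2^ω`. -/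
def UniversallyNull (X : Set CS) : Prop :=
  ∀ μ : Measure CS, IsFiniteMeasure μ → (∀ x : CS, μ {x} = 0) → μ X = 0

/-- `X` is strongly null: for every sequence of positive `ε n` there are sets `A n` of
diameter `< ε n` (with respect to the standard metric `d(x,y) = 2^{-min{n : x n ≠ y n}}`,
expressed combinatorially) covering `X`. -/
def StronglyNull (X : Set CS) : Prop :=
  ∀ ε : ℕ → ℝ, (∀ n, 0 < ε n) → ∃ A : ℕ → Set CS,
    (∀ n, ∃ N : ℕ, (2 : ℝ)⁻¹ ^ N < ε n ∧ ∀ x ∈ A n, ∀ y ∈ A n, ∀ i < N, x i = y i) ∧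
    X ⊆ ⋃ n, A n

/-- `X` is perfectly null in the transitive sense: for every perfect `P` there is a
`G_δ` set `G ⊇ X` with `(G + t) ∩ P` being `P`-null for every `t`. -/
def PNPrime (X : Set CS) : Prop :=
  ∀ P, PerfSet P → ∃ G : Set CS, IsGδ G ∧ X ⊆ G ∧
    ∀ t : CS, PNull P ((fun g => g + t) '' G)

namespace Aux

/-- the word of the first `n` coordinates of `x` -/
def word (x : CS) (n : ℕ) : List (ZMod 2) := List.ofFn fun i : Fin n => x i

@[simp] lemma word_length (x : CS) (n : ℕ) : (word x n).length = n := by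
  simp [word]

lemma word_getD (x : CS) {n i : ℕ} (h : i < n) : (word x n).getD i 0 = x i := by
  rw [List.getD_eq_getElem _ _ (by simpa using h)]
  simp [word]

lemma cyl_eq_cylinder (w : List (ZMod 2)) :
    cyl w = PiNat.cylinder (fun i => w.getD i 0) w.length := by
  ext x; simp [cyl, PiNat.mem_cylinder_iff]

lemma isOpen_cyl (w : List (ZMod 2)) : IsOpen (cyl w) := by
  rw [cyl_eq_cylinder]; exact PiNat.isOpen_cylinder _ _ _

lemma isClosed_cyl (w : List (ZMod 2)) : IsClosed (cyl w) := by
  rw [cyl_eq_cylinder, PiNat.cylinder_eq_pi]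
  exact isClosed_set_pi fun i _ => isClosed_singleton

lemma measurableSet_cyl (w : List (ZMod 2)) : MeasurableSet (cyl w) :=
  (isOpen_cyl w).measurableSet

@[simp] lemma cyl_nil : cyl ([] : List (ZMod 2)) = univ := by
  ext x; simp [cyl]

lemma mem_cyl_append {x : CS} {w : List (ZMod 2)} {b : ZMod 2} :
    x ∈ cyl (w ++ [b]) ↔ x ∈ cyl w ∧ x w.length = b := by
  constructor
  · intro h
    refine ⟨fun i hi => ?_, ?_⟩
    · have := h i (by simp; omega)
      rwa [List.getD_append _ _ _ _ hi] at this
    · have := h w.length (by simp)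
      rwa [List.getD_append_right _ _ _ _ le_rfl, Nat.sub_self] at this
  · rintro ⟨h1, h2⟩ i hi
    simp only [List.length_append, List.length_singleton] at hi
    rcases Nat.lt_or_ge i w.length with h | h
    · rw [List.getD_append _ _ _ _ h]; exact h1 i h
    · have : i = w.length := by omega
      subst this
      rw [List.getD_append_right _ _ _ _ le_rfl, Nat.sub_self]
      exact h2

lemma cyl_append_subset (w : List (ZMod 2)) (b : ZMod 2) : cyl (w ++ [b]) ⊆ cyl w :=
  fun _ h => (mem_cyl_append.1 h).1

lemma zmod2_cases (b : ZMod 2) : b = 0 ∨ b = 1 := by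
  fin_cases b
  · exact Or.inl rfl
  · exact Or.inr rfl

lemma cyl_split (w : List (ZMod 2)) : cyl w = cyl (w ++ [0]) ∪ cyl (w ++ [1]) := by
  ext x
  simp only [mem_union, mem_cyl_append]
  constructor
  · intro h
    rcases zmod2_cases (x w.length) with hb | hb
    · exact Or.inl ⟨h, hb⟩
    · exact Or.inr ⟨h, hb⟩
  · rintro (h | h)
    · exact h.1
    · exact h.1

lemma cyl_disjoint (w : List (ZMod 2)) : Disjoint (cyl (w ++ [0])) (cyl (w ++ [1])) := by
  rw [Set.disjoint_iff_inter_eq_empty]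
  ext x
  simp only [mem_inter_iff, mem_empty_iff_false, iff_false, not_and]
  intro h0 h1
  have e0 := (mem_cyl_append.1 h0).2
  have e1 := (mem_cyl_append.1 h1).2
  rw [e0] at e1; exact absurd e1 (by decide)

lemma measure_cyl_split (μ : Measure CS) (w : List (ZMod 2)) :
    μ (cyl w) = μ (cyl (w ++ [0])) + μ (cyl (w ++ [1])) := by
  rw [cyl_split w]
  exact measure_union (cyl_disjoint w) (measurableSet_cyl _)

lemma mem_cyl_word (x : CS) (n : ℕ) : x ∈ cyl (word x n) := by
  intro i hi
  rw [word_length] at hi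
  rw [word_getD x hi]

lemma eq_of_mem_cyl {x : CS} {u v : List (ZMod 2)} (hl : u.length = v.length)
    (hu : x ∈ cyl u) (hv : x ∈ cyl v) : u = v := by
  apply List.ext_getElem hl
  intro i h1 h2
  rw [← List.getD_eq_getElem u 0 h1, ← List.getD_eq_getElem v 0 h2,
    ← hu i h1, ← hv i (hl ▸ h1)]

lemma mem_cyl_iff_word {x : CS} {w : List (ZMod 2)} : x ∈ cyl w ↔ word x w.length = w :=
  ⟨fun h => eq_of_mem_cyl (by simp) (mem_cyl_word x _) h,
   fun h => h ▸ mem_cyl_word x _⟩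

/-- basis property: every open set containing x contains a cylinder of x -/
lemma exists_word_subset {U : Set CS} (hU : IsOpen U) {x : CS} (hx : x ∈ U) :
    ∃ n, cyl (word x n) ⊆ U := by
  obtain ⟨v, ⟨y, n, rfl⟩, hxv, hvU⟩ :=
    (PiNat.isTopologicalBasis_cylinders (fun _ : ℕ => ZMod 2)).exists_subset_of_mem_open hx hU
  refine ⟨n, fun z hz => hvU ?_⟩
  rw [PiNat.mem_cylinder_iff] at hxv ⊢
  intro i hi
  have := hz i (by simpa using hi)
  rw [word_getD x hi] at this
  rw [this, hxv i hi]

end Aux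

namespace Aux

variable {R P Q : Set CS} {ν νP νQ : Measure CS}

lemma canonical_compl_null (hR : IsClosed R) (hν : IsCanonical R ν) : ν Rᶜ = 0 := by
  haveI := hν.1
  rw [prob_compl_eq_zero_iff hR.measurableSet]
  exact hν.2.1

lemma canonical_null_of_disjoint (hR : IsClosed R) (hν : IsCanonical R ν) {S : Set CS}
    (h : S ∩ R = ∅) : ν S = 0 :=
  measure_mono_null (fun x hx => fun hxR => by
    rw [← mem_empty_iff_false x, ← h]; exact ⟨hx, hxR⟩) (canonical_compl_null hR hν)

lemma branch_mono (hQP : Q ⊆ P) {w : List (ZMod 2)} (h : Branch Q w) : Branch P w :=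
  ⟨h.1.mono (inter_subset_inter_right _ hQP), h.2.mono (inter_subset_inter_right _ hQP)⟩

lemma canonical_branch_eq (hν : IsCanonical R ν) {w : List (ZMod 2)} (hw : Branch R w)
    (b : ZMod 2) : ν (cyl (w ++ [b])) = ν (cyl (w ++ [0])) := by
  rcases zmod2_cases b with rfl | rfl
  · rfl
  · exact (hν.2.2 w hw).symm

lemma canonical_branch_two (hν : IsCanonical R ν) {w : List (ZMod 2)} (hw : Branch R w)
    (b : ZMod 2) : 2 * ν (cyl (w ++ [b])) = ν (cyl w) := by
  rw [canonical_branch_eq hν hw b, two_mul, measure_cyl_split ν w, hν.2.2 w hw]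

/-- Key comparison on cylinders. -/
lemma key_cyl (hQP : Q ⊆ P) (hQc : IsClosed Q) (hP : IsCanonical P νP)
    (hQ : IsCanonical Q νQ) (w : List (ZMod 2)) :
    (cyl w ∩ Q).Nonempty → νP (cyl w) ≤ νQ (cyl w) := by
  haveI := hP.1; haveI := hQ.1
  induction w using List.reverseRecOn with
  | nil =>
    intro _
    simp only [cyl_nil, measure_univ, le_refl]
  | append_singleton w b ih =>
    intro hne
    have hw : (cyl w ∩ Q).Nonempty :=
      hne.mono (inter_subset_inter_left _ (cyl_append_subset w b))
    have hiw := ih hw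
    by_cases hbr : Branch Q w
    · have hbrP : Branch P w := branch_mono hQP hbr
      have h2 : 2 * νP (cyl (w ++ [b])) ≤ 2 * νQ (cyl (w ++ [b])) := by
        rw [canonical_branch_two hP hbrP b, canonical_branch_two hQ hbr b]
        exact hiw
      exact (ENNReal.mul_le_mul_iff_right (by norm_num) (by norm_num)).1 h2
    · -- non-branching: the other side misses Q
      have key : ∀ b' : ZMod 2, b' ≠ b → cyl (w ++ [b']) ∩ Q = ∅ := by
        intro b' hb'
        by_contra hne'
        apply hbr
        have hb'cases := zmod2_cases b'
        have hbcases := zmod2_cases b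
        rcases hb'cases with rfl | rfl <;> rcases hbcases with rfl | rfl
        · exact absurd rfl hb'
        · exact ⟨nonempty_iff_ne_empty.2 hne', hne⟩
        · exact ⟨hne, nonempty_iff_ne_empty.2 hne'⟩
        · exact absurd rfl hb'
      have hzero : νQ (cyl (w ++ [b + 1])) = 0 :=
        canonical_null_of_disjoint hQc hQ (key (b + 1) (by
          rcases zmod2_cases b with rfl | rfl <;> decide))
      have hQeq : νQ (cyl (w ++ [b])) = νQ (cyl w) := by
        rcases zmod2_cases b with rfl | rfl
        · rw [measure_cyl_split νQ w]
          have : (0 : ZMod 2) + 1 = 1 := by decide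
          rw [this] at hzero
          rw [hzero, add_zero]
        · rw [measure_cyl_split νQ w]
          have : (1 : ZMod 2) + 1 = 0 := by decide
          rw [this] at hzero
          rw [hzero, zero_add]
      calc νP (cyl (w ++ [b])) ≤ νP (cyl w) := measure_mono (cyl_append_subset w b)
        _ ≤ νQ (cyl w) := hiw
        _ = νQ (cyl (w ++ [b])) := hQeq.symm

lemma key_cyl_inter (hQP : Q ⊆ P) (hQc : IsClosed Q) (hP : IsCanonical P νP)
    (hQ : IsCanonical Q νQ) (w : List (ZMod 2)) :
    νP (cyl w ∩ Q) ≤ νQ (cyl w) := by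
  rcases eq_empty_or_nonempty (cyl w ∩ Q) with h | h
  · rw [h]; simp
  · exact le_trans (measure_mono inter_subset_left) (key_cyl hQP hQc hP hQ w h)

lemma word_take (x : CS) {m n : ℕ} (h : m ≤ n) : (word x n).take m = word x m := by
  apply List.ext_getElem
  · simp [h]
  · intro i h1 h2
    simp [word]

lemma cyl_comparable {x : CS} {u v : List (ZMod 2)} (hu : x ∈ cyl u) (hv : x ∈ cyl v) :
    u <+: v ∨ v <+: u := by
  rw [mem_cyl_iff_word] at hu hv
  rcases Nat.le_total u.length v.length with h | h
  · left
    rw [← hu, ← hv, ← word_take x h]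
    exact List.take_prefix _ _
  · right
    rw [← hu, ← hv, ← word_take x h]
    exact List.take_prefix _ _

/-- Key comparison on open sets. -/
lemma key_open (hQP : Q ⊆ P) (hQc : IsClosed Q) (hP : IsCanonical P νP)
    (hQ : IsCanonical Q νQ) {U : Set CS} (hU : IsOpen U) :
    νP (U ∩ Q) ≤ νQ U := by
  set S : Set (List (ZMod 2)) := {w | cyl w ⊆ U ∧ ∀ v, v <+: w → v ≠ w → ¬(cyl v ⊆ U)} with hS
  have hcover : U = ⋃ w ∈ S, cyl w := by
    apply Subset.antisymm
    · intro x hx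
      have hex : ∃ n, cyl (word x n) ⊆ U := exists_word_subset hU hx
      classical
      let n₀ := Nat.find hex
      refine mem_biUnion (?_ : word x n₀ ∈ S) (mem_cyl_word x n₀)
      refine ⟨Nat.find_spec hex, fun v hpre hne hvU => ?_⟩
      have hlen : v.length ≤ n₀ := by
        simpa using hpre.length_le
      have hv : v = word x v.length := by
        rw [← word_take x hlen, ← List.prefix_iff_eq_take.1 hpre]
      have hlt : v.length < n₀ := by
        rcases lt_or_eq_of_le hlen with h | h
        · exact h
        · exfalso; apply hne
          apply List.IsPrefix.eq_of_length hpre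
          simp [h]
      exact Nat.find_min hex hlt (hv ▸ hvU)
    · exact iUnion₂_subset fun w hw => hw.1
  have hdisj : S.PairwiseDisjoint cyl := by
    intro w hw w' hw' hne
    rw [Function.onFun, Set.disjoint_left]
    intro x hxw hxw'
    rcases cyl_comparable hxw hxw' with h | h
    · exact hw'.2 w h (fun e => hne e) hw.1
    · exact hw.2 w' h (fun e => hne e.symm) hw'.1
  have hScount : S.Countable := S.to_countable
  calc νP (U ∩ Q) = νP (⋃ w ∈ S, (cyl w ∩ Q)) := by rw [hcover, iUnion₂_inter]
    _ ≤ ∑' w : S, νP (cyl w ∩ Q) := measure_biUnion_le νP hScount _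
    _ ≤ ∑' w : S, νQ (cyl w) :=
        ENNReal.tsum_le_tsum fun w => key_cyl_inter hQP hQc hP hQ w
    _ = νQ (⋃ w ∈ S, cyl w) :=
        (measure_biUnion hScount hdisj fun w _ => measurableSet_cyl w).symm
    _ = νQ U := by rw [← hcover]

/-- Key comparison for arbitrary subsets of Q. -/
lemma key_subset (hQP : Q ⊆ P) (hQc : IsClosed Q) (hP : IsCanonical P νP)
    (hQ : IsCanonical Q νQ) {B : Set CS} (hB : B ⊆ Q) :
    νP B ≤ νQ B := by
  haveI := hQ.1
  by_contra hcon
  push_neg at hcon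
  obtain ⟨U, hBU, hUopen, hUlt⟩ := Set.exists_isOpen_lt_of_lt B (νP B) hcon
  have : νP B ≤ νQ U := le_trans (measure_mono (subset_inter hBU hB))
    (key_open hQP hQc hP hQ hUopen)
  exact absurd (lt_of_le_of_lt this hUlt) (lt_irrefl _)

end Aux

namespace Aux

open TopologicalSpace

noncomputable def fc : Measure CS := Measure.addHaarMeasure (⊤ : PositiveCompacts CS)

instance : fc.IsAddLeftInvariant := by
  unfold fc; infer_instance

lemma fc_univ : fc Set.univ = 1 := by
  have := Measure.addHaarMeasure_self (K₀ := (⊤ : PositiveCompacts CS))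
  simpa [fc] using this

instance : IsProbabilityMeasure fc := ⟨fc_univ⟩

variable (R : Set CS)

open Classical in
/-- the child of `u` chosen when `u` is a non-branching node -/
noncomputable def childbit (u : List (ZMod 2)) : ZMod 2 :=
  if (cyl (u ++ [0]) ∩ R).Nonempty then 0 else 1

open Classical in
noncomputable def stStep (p : List (ZMod 2) × ℕ) (b : ZMod 2) : List (ZMod 2) × ℕ :=
  if Branch R p.1 then (p.1 ++ [b], p.2 + 1) else (p.1 ++ [childbit R p.1], p.2)

/-- the node of the tree of `R` reached after reading bits of `x`, with the
number of bits consumed -/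
noncomputable def st (x : CS) : ℕ → List (ZMod 2) × ℕ
  | 0 => ([], 0)
  | k + 1 => stStep R (st x k) (x (st x k).2)

variable {R}

lemma stStep_fst_length {p : List (ZMod 2) × ℕ} {b : ZMod 2} :
    (stStep R p b).1.length = p.1.length + 1 := by
  unfold stStep
  split <;> simp

lemma st_fst_length (x : CS) (k : ℕ) : (st R x k).1.length = k := by
  induction k with
  | zero => rfl
  | succ k ih => rw [st, stStep_fst_length, ih]

lemma st_snd_le (x : CS) (k : ℕ) : (st R x k).2 ≤ k := by
  induction k with
  | zero => exact le_rfl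
  | succ k ih =>
    rw [st]
    unfold stStep
    split
    · simpa using ih
    · exact le_trans ih (Nat.le_succ k)

lemma childbit_spec {u : List (ZMod 2)} (h : (cyl u ∩ R).Nonempty) :
    (cyl (u ++ [childbit R u]) ∩ R).Nonempty := by
  unfold childbit
  split
  · assumption
  · rw [cyl_split u, union_inter_distrib_right] at h
    rw [union_nonempty] at h
    rcases h with h | h
    · exact absurd h (by assumption)
    · exact h

lemma st_nonempty (hne : R.Nonempty) (x : CS) (k : ℕ) :
    (cyl (st R x k).1 ∩ R).Nonempty := by
  induction k with
  | zero => simpa [st] using hne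
  | succ k ih =>
    rw [st]
    unfold stStep
    split
    · rename_i hbr
      rcases zmod2_cases (x (st R x k).2) with h | h
      · rw [h]; exact hbr.1
      · rw [h]; exact hbr.2
    · exact childbit_spec ih

lemma st_congr {x y : CS} (k : ℕ) (h : ∀ i, i < (st R x k).2 → x i = y i) :
    st R x k = st R y k := by
  induction k with
  | zero => rfl
  | succ k ih =>
    have hmono : (st R x k).2 ≤ (st R x (k + 1)).2 := by
      rw [st]; unfold stStep; split
      · simp
      · exact le_rfl
    have hk : st R x k = st R y k := ih fun i hi => h i (lt_of_lt_of_le hi hmono)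
    rw [st, st, ← hk]
    unfold stStep
    split
    · rename_i hbr
      have hx : x (st R x k).2 = y (st R x k).2 := by
        apply h
        rw [st]
        unfold stStep
        rw [if_pos hbr]
        exact Nat.lt_succ_self _
      rw [hx]
    · rfl

variable (R) in
/-- the canonical map `2^ω → R` -/
noncomputable def gmap (x : CS) : CS := fun n => (st R x (n + 1)).1.getD n 0

lemma st_prefix {x : CS} {k l : ℕ} (h : k ≤ l) : (st R x k).1 <+: (st R x l).1 := by
  induction l with
  | zero =>
    have : k = 0 := Nat.le_zero.1 h
    subst this; exact List.prefix_refl _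
  | succ l ih =>
    rcases Nat.lt_or_ge k (l + 1) with h' | h'
    · refine (ih (Nat.lt_succ_iff.1 h')).trans ?_
      rw [st]
      unfold stStep
      split <;> exact List.prefix_append _ _
    · have : k = l + 1 := le_antisymm h h'
      subst this; exact List.prefix_refl _

lemma prefix_getD {u v : List (ZMod 2)} (h : u <+: v) {i : ℕ} (hi : i < u.length) :
    v.getD i 0 = u.getD i 0 := by
  rw [List.getD_eq_getElem _ _ hi, List.getD_eq_getElem _ _ (lt_of_lt_of_le hi h.length_le)]
  exact (h.getElem hi).symm

lemma gmap_mem_cyl_st (x : CS) (k : ℕ) : gmap R x ∈ cyl (st R x k).1 := by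
  intro i hi
  rw [st_fst_length] at hi
  show (st R x (i + 1)).1.getD i 0 = _
  rw [prefix_getD (st_prefix hi) (by rw [st_fst_length]; exact Nat.lt_succ_self i)]

lemma gmap_mem_cyl_iff {x : CS} {v : List (ZMod 2)} :
    gmap R x ∈ cyl v ↔ (st R x v.length).1 = v := by
  constructor
  · intro h
    exact eq_of_mem_cyl (st_fst_length x v.length) (gmap_mem_cyl_st x v.length) h
  · intro h
    rw [← h]
    exact gmap_mem_cyl_st x _

lemma gmap_mem (hR : Perfect R) (hne : R.Nonempty) (x : CS) : gmap R x ∈ R := by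
  by_contra h
  obtain ⟨n, hn⟩ := exists_word_subset hR.closed.isOpen_compl h
  have h1 : word (gmap R x) n = (st R x n).1 :=
    eq_of_mem_cyl (by simp [st_fst_length]) (mem_cyl_word _ n) (gmap_mem_cyl_st x n)
  obtain ⟨y, hy1, hy2⟩ := st_nonempty hne x n
  exact (hn (h1 ▸ hy1)) hy2

lemma measurableSet_st (k : ℕ) (p : List (ZMod 2) × ℕ) :
    MeasurableSet {x : CS | st R x k = p} := by
  induction k generalizing p with
  | zero =>
    by_cases h : (([], 0) : List (ZMod 2) × ℕ) = p
    · have : {x : CS | st R x 0 = p} = univ := eq_univ_of_forall fun x => h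
      rw [this]; exact MeasurableSet.univ
    · have : {x : CS | st R x 0 = p} = ∅ := eq_empty_of_forall_notMem fun x => h
      rw [this]; exact MeasurableSet.empty
  | succ k ih =>
    have hdecomp : {x : CS | st R x (k + 1) = p} =
        ⋃ q : List (ZMod 2) × ℕ, ({x : CS | st R x k = q} ∩
          ((fun x : CS => x q.2) ⁻¹' {b | stStep R q b = p})) := by
      ext x
      simp only [mem_setOf_eq, mem_iUnion, mem_inter_iff, mem_preimage]
      constructor
      · intro h
        exact ⟨st R x k, rfl, by rw [st] at h; exact h⟩
      · rintro ⟨q, hq, hstep⟩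
        rw [st, hq]
        exact hstep
    rw [hdecomp]
    exact MeasurableSet.iUnion fun q =>
      (ih q).inter ((measurable_pi_apply q.2) ((Set.toFinite _).measurableSet))

lemma measurable_gmap : Measurable (gmap R) := by
  apply measurable_pi_lambda
  intro n
  apply measurable_to_countable'
  intro b
  have : (fun x : CS => (st R x (n + 1)).1.getD n 0) ⁻¹' {b} =
      ⋃ p ∈ {p : List (ZMod 2) × ℕ | p.1.getD n 0 = b}, {x : CS | st R x (n + 1) = p} := by
    ext x
    simp only [mem_preimage, mem_singleton_iff, mem_iUnion, mem_setOf_eq]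
    constructor
    · intro h
      exact ⟨st R x (n + 1), h, rfl⟩
    · rintro ⟨p, hp, hx⟩
      rw [hx]; exact hp
  exact this ▸ MeasurableSet.biUnion (Set.to_countable _) fun p _ => measurableSet_st _ p

end Aux

namespace Aux

variable {R : Set CS}

/-- the coordinate-flip vector -/
def esingle (c : ℕ) : CS := fun i => if i = c then 1 else 0

lemma zmod2_add_add : ∀ a b : ZMod 2, a + (a + b) = b := by decide

lemma esingle_add_add (c : ℕ) (x : CS) : esingle c + (esingle c + x) = x := by
  funext i
  exact zmod2_add_add _ _

lemma st_flip {x : CS} {k c : ℕ} {w : List (ZMod 2)} (h : st R x k = (w, c)) :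
    st R (esingle c + x) k = (w, c) := by
  rw [← h]
  symm
  apply st_congr
  intro i hi
  rw [h] at hi
  show x i = esingle c i + x i
  rw [esingle, if_neg (Nat.ne_of_lt hi), zero_add]

lemma st_flip_iff {x : CS} {k c : ℕ} {w : List (ZMod 2)} :
    st R (esingle c + x) k = (w, c) ↔ st R x k = (w, c) := by
  constructor
  · intro h
    have := st_flip h
    rwa [esingle_add_add] at this
  · exact st_flip

lemma st_succ_branch {w : List (ZMod 2)} (hbr : Branch R w) {k : ℕ} (hk : w.length = k)
    {x : CS} {b : ZMod 2} {c : ℕ} :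
    st R x (k + 1) = (w ++ [b], c + 1) ↔ st R x k = (w, c) ∧ x c = b := by
  constructor
  · intro h
    rw [st] at h
    unfold stStep at h
    split at h
    · rename_i hbr'
      rw [Prod.mk.injEq] at h
      obtain ⟨h1, h2⟩ := h
      have hlen : (st R x k).1.length = w.length := by rw [st_fst_length, hk]
      obtain ⟨he1, he2⟩ := List.append_inj h1 hlen
      have hb : x (st R x k).2 = b := by
        simpa using he2
      have hc : (st R x k).2 = c := by omega
      refine ⟨?_, by rw [← hc, hb]⟩
      rw [← he1, ← hc]
    · rename_i hbr'
      exfalso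
      rw [Prod.mk.injEq] at h
      have hlen : (st R x k).1.length = w.length := by rw [st_fst_length, hk]
      obtain ⟨he1, _⟩ := List.append_inj h.1 hlen
      exact hbr' (he1 ▸ hbr)
  · rintro ⟨h1, h2⟩
    rw [st, h1]
    unfold stStep
    split
    · simp [h2]
    · rename_i hc
      exact absurd hbr hc

lemma st_succ_zero {w : List (ZMod 2)} (hbr : Branch R w) {k : ℕ} (hk : w.length = k)
    (b : ZMod 2) : {x : CS | st R x (k + 1) = (w ++ [b], 0)} = ∅ := by
  apply eq_empty_of_forall_notMem
  intro x h
  simp only [mem_setOf_eq] at h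
  rw [st] at h
  unfold stStep at h
  split at h
  · rw [Prod.mk.injEq] at h
    omega
  · rename_i hbr'
    rw [Prod.mk.injEq] at h
    have hlen : (st R x k).1.length = w.length := by rw [st_fst_length, hk]
    obtain ⟨he1, _⟩ := List.append_inj h.1 hlen
    exact hbr' (he1 ▸ hbr)

lemma zmod2_one_add_eq_one_iff : ∀ a : ZMod 2, (1 + a = 1 ↔ a = 0) := by decide

lemma measure_st_branch_eq {w : List (ZMod 2)} (hbr : Branch R w) {k : ℕ}
    (hk : w.length = k) (c : ℕ) :
    fc {x : CS | st R x (k + 1) = (w ++ [(0 : ZMod 2)], c + 1)} =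
      fc {x : CS | st R x (k + 1) = (w ++ [(1 : ZMod 2)], c + 1)} := by
  have h0 : {x : CS | st R x (k + 1) = (w ++ [(0 : ZMod 2)], c + 1)} =
      {x : CS | st R x k = (w, c)} ∩ {x : CS | x c = 0} := by
    ext x; simp only [mem_setOf_eq, mem_inter_iff, st_succ_branch hbr hk]
  have h1 : {x : CS | st R x (k + 1) = (w ++ [(1 : ZMod 2)], c + 1)} =
      {x : CS | st R x k = (w, c)} ∩ {x : CS | x c = 1} := by
    ext x; simp only [mem_setOf_eq, mem_inter_iff, st_succ_branch hbr hk]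
  have hpre : (fun x : CS => esingle c + x) ⁻¹'
      ({x : CS | st R x k = (w, c)} ∩ {x : CS | x c = 1}) =
      {x : CS | st R x k = (w, c)} ∩ {x : CS | x c = 0} := by
    ext x
    simp only [mem_preimage, mem_inter_iff, mem_setOf_eq]
    constructor
    · rintro ⟨hs, hc⟩
      refine ⟨st_flip_iff.1 hs, ?_⟩
      have : esingle c c + x c = 1 := hc
      rw [esingle, if_pos rfl] at this
      exact (zmod2_one_add_eq_one_iff (x c)).1 this
    · rintro ⟨hs, hc⟩
      refine ⟨st_flip_iff.2 hs, ?_⟩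
      show esingle c c + x c = 1
      rw [esingle, if_pos rfl, hc, add_zero]
  rw [h0, h1, ← hpre, measure_preimage_add]

lemma measure_st_fst (v : List (ZMod 2)) (K : ℕ) :
    fc {x : CS | (st R x K).1 = v} =
      ∑ c ∈ Finset.range (K + 1), fc {x : CS | st R x K = (v, c)} := by
  have hdecomp : {x : CS | (st R x K).1 = v} =
      ⋃ c ∈ Finset.range (K + 1), {x : CS | st R x K = (v, c)} := by
    ext x
    simp only [mem_setOf_eq, mem_iUnion, Finset.mem_range]
    constructor
    · intro h
      exact ⟨(st R x K).2, Nat.lt_succ_of_le (st_snd_le x K), by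
        rw [← h]⟩
    · rintro ⟨c, _, hc⟩
      rw [hc]
  rw [hdecomp]
  apply measure_biUnion_finset
  · intro c _ c' _ hne
    rw [Function.onFun, Set.disjoint_left]
    intro x hx hx'
    simp only [mem_setOf_eq] at hx hx'
    rw [hx] at hx'
    exact hne (congrArg Prod.snd hx')
  · exact fun c _ => measurableSet_st _ _

variable (R) in
/-- the canonical measure of `R` -/
noncomputable def canonν : Measure CS := fc.map (gmap R)

theorem exists_canonical (hR : PerfSet R) : ∃ ν : Measure CS, IsCanonical R ν := by
  refine ⟨canonν R, ?_, ?_, ?_⟩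
  · exact Measure.isProbabilityMeasure_map measurable_gmap.aemeasurable
  · rw [canonν, Measure.map_apply measurable_gmap hR.1.closed.measurableSet]
    have : gmap R ⁻¹' R = univ := eq_univ_of_forall fun x => gmap_mem hR.1 hR.2 x
    rw [this, fc_univ]
  · intro w hbr
    have key : ∀ b : ZMod 2, (canonν R) (cyl (w ++ [b])) =
        ∑ c ∈ Finset.range (w.length + 2), fc {x : CS | st R x (w.length + 1) = (w ++ [b], c)} := by
      intro b
      rw [canonν, Measure.map_apply measurable_gmap (measurableSet_cyl _)]
      have hpre : gmap R ⁻¹' cyl (w ++ [b]) = {x : CS | (st R x (w.length + 1)).1 = w ++ [b]} := by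
        ext x
        rw [mem_preimage, mem_setOf_eq, gmap_mem_cyl_iff]
        simp
      rw [hpre, measure_st_fst]
    rw [key 0, key 1,
      Finset.sum_range_succ' (fun c => fc {x : CS | st R x (w.length + 1) = (w ++ [(0 : ZMod 2)], c)}) (w.length + 1),
      Finset.sum_range_succ' (fun c => fc {x : CS | st R x (w.length + 1) = (w ++ [(1 : ZMod 2)], c)}) (w.length + 1)]
    congr 1
    · apply Finset.sum_congr rfl
      intro c _
      exact measure_st_branch_eq hbr rfl c
    · rw [st_succ_zero hbr rfl 0, st_succ_zero hbr rfl 1]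

end Aux

namespace Aux

variable {P Q : Set CS} {νP νQ : Measure CS}

lemma key_nullmeasurable (hQP : Q ⊆ P) (hQc : IsClosed Q) (hP : IsCanonical P νP)
    (hQ : IsCanonical Q νQ) {s : Set CS} (hs : s ⊆ Q)
    (h : NullMeasurableSet s νQ) : NullMeasurableSet s νP := by
  obtain ⟨t, hts, htm, hst⟩ := h.exists_measurable_subset_ae_eq
  have h1 : νQ (s \ t) = 0 := (ae_eq_set.1 hst).2
  have h2 : νP (s \ t) = 0 :=
    le_antisymm (le_trans (key_subset hQP hQc hP hQ (diff_subset.trans hs)) h1.le) (zero_le)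
  refine htm.nullMeasurableSet.congr (ae_eq_set.2 ⟨?_, h2⟩)
  have : t \ s = ∅ := diff_eq_empty.2 hts
  rw [this, measure_empty]

end Aux


open Aux in
/-- If `Q n ⊆ P` are perfect sets with `μ_P (⋃ n, Q n) = 1` and `A ⊆ P` is
such that each `A ∩ Q n` is `Q n`-measurable, then `A` is `P`-measurable and
`μ_P A ≤ Σ_n μ_{Q n} (A ∩ Q n)`; in particular if each `A ∩ Q n` is `Q n`-null,
then `A` is `P`-null. -/
theorem stmt_1 (P : Set CS) (hP : PerfSet P) (Q : ℕ → Set CS) (hQ : ∀ n, PerfSet (Q n))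
    (hQP : ∀ n, Q n ⊆ P)
    (hcover : ∀ ν : Measure CS, IsCanonical P ν → ν (⋃ n, Q n) = 1)
    (A : Set CS) (hA : A ⊆ P)
    (hmeas : ∀ n, PMeasurable (Q n) A) :
    (PMeasurable P A ∧
      ∀ (νP : Measure CS) (νQ : ℕ → Measure CS), IsCanonical P νP →
        (∀ n, IsCanonical (Q n) (νQ n)) → νP A ≤ ∑' n, νQ n (A ∩ Q n)) ∧
    ((∀ n, PNull (Q n) A) → PNull P A) := by
  have hQclosed : ∀ n, IsClosed (Q n) := fun n => (hQ n).1.closed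
  have hAP : A ∩ P = A := Set.inter_eq_left.2 hA
  have hcompl : ∀ νP : Measure CS, IsCanonical P νP → νP (⋃ n, Q n)ᶜ = 0 := by
    intro νP hνP
    haveI := hνP.1
    rw [prob_compl_eq_zero_iff (MeasurableSet.iUnion fun n => (hQclosed n).measurableSet)]
    exact hcover νP hνP
  have hineq : ∀ (νP : Measure CS) (νQm : ℕ → Measure CS), IsCanonical P νP →
      (∀ n, IsCanonical (Q n) (νQm n)) → νP A ≤ ∑' n, νQm n (A ∩ Q n) := by
    intro νP νQm hνP hνQm
    have hsub : A ⊆ (⋃ n, A ∩ Q n) ∪ (⋃ n, Q n)ᶜ := by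
      intro x hx
      by_cases h : x ∈ ⋃ n, Q n
      · obtain ⟨n, hn⟩ := Set.mem_iUnion.1 h
        exact Or.inl (Set.mem_iUnion.2 ⟨n, hx, hn⟩)
      · exact Or.inr h
    calc νP A ≤ νP ((⋃ n, A ∩ Q n) ∪ (⋃ n, Q n)ᶜ) := measure_mono hsub
      _ ≤ νP (⋃ n, A ∩ Q n) + νP (⋃ n, Q n)ᶜ := measure_union_le _ _
      _ = νP (⋃ n, A ∩ Q n) := by rw [hcompl νP hνP, add_zero]
      _ ≤ ∑' n, νP (A ∩ Q n) := measure_iUnion_le _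
      _ ≤ ∑' n, νQm n (A ∩ Q n) := ENNReal.tsum_le_tsum fun n =>
          key_subset (hQP n) (hQclosed n) hνP (hνQm n) Set.inter_subset_right
  refine ⟨⟨?_, hineq⟩, ?_⟩
  · -- PMeasurable
    intro νP hνP
    rw [hAP]
    choose ν' hν' using fun n => exists_canonical (hQ n)
    have hn : ∀ n, NullMeasurableSet (A ∩ Q n) νP := fun n =>
      key_nullmeasurable (hQP n) (hQclosed n) hνP (hν' n) Set.inter_subset_right
        (hmeas n (ν' n) (hν' n))
    have hdec : A = (⋃ n, A ∩ Q n) ∪ (A \ ⋃ n, Q n) := by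
      ext x
      constructor
      · intro hx
        by_cases h : x ∈ ⋃ n, Q n
        · obtain ⟨n, hn'⟩ := Set.mem_iUnion.1 h
          exact Or.inl (Set.mem_iUnion.2 ⟨n, hx, hn'⟩)
        · exact Or.inr ⟨hx, h⟩
      · rintro (hx | hx)
        · obtain ⟨n, hn', _⟩ := Set.mem_iUnion.1 hx
          exact hn'
        · exact hx.1
    rw [hdec]
    refine (NullMeasurableSet.iUnion hn).union (NullMeasurableSet.of_null ?_)
    exact measure_mono_null (fun x hx => hx.2) (hcompl νP hνP)
  · -- PNull
    intro h0 νP hνP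
    rw [hAP]
    choose ν' hν' using fun n => exists_canonical (hQ n)
    have hle := hineq νP ν' hνP hν'
    have hzero : ∀ n, ν' n (A ∩ Q n) = 0 := fun n => h0 n (ν' n) (hν' n)
    rw [le_antisymm (le_trans hle (by simp [hzero])) (zero_le)]
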